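/- For every k ∈ ℕ and m ∈ ℕ₀, the odd moment e_{k,2m+1} = ∫₀¹ 2(sin(kπt))² t^{2m+1} dt equals 1/(2m+2) + Σ_{n=1}^{m} (−1)ⁿ (2m+1)! / ((2(m−n)+2)! · 2^{2n}) · 1/(k^{2n} π^{2n}). -/

import Mathlib

open Real MeasureTheory intervalIntegral Finset

/-- For `k ∈ ℕ` (k ≥ 1) and `n ∈ ℕ₀`, the moment `e_{k,n} = ∫₀¹ 2 (sin(kπt))² tⁿ dt`. -/
noncomputable def bridgeMoment (k n : ℕ) : ℝ :=
  ∫ t in (0:ℝ)..1, 2 * (Real.sin (k * Real.pi * t))^2 * t^n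

noncomputable def cosMoment (k n : ℕ) : ℝ :=
  ∫ t in (0:ℝ)..1, Real.cos (2*k*Real.pi*t) * t^n



lemma cos_int : ∀ (k n : ℕ), IntervalIntegrable (fun t => Real.cos (2*k*Real.pi*t) * t^n) volume 0 1 := by
  intro k n
  exact ((Real.continuous_cos.comp (by continuity)).mul (continuous_pow n)).intervalIntegrable 0 1

lemma bridge_eq (k n : ℕ) : bridgeMoment k n = 1/((n:ℝ)+1) - cosMoment k n := by
  unfold bridgeMoment cosMoment
  have h : ∀ t : ℝ, 2 * (Real.sin (k * Real.pi * t))^2 * t^n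
      = t^n - Real.cos (2*k*Real.pi*t) * t^n := by
    intro t
    have h1 := Real.cos_two_mul (k * Real.pi * t)
    have h2 := Real.sin_sq_add_cos_sq (k * Real.pi * t)
    have h3 : (2:ℝ)*k*Real.pi*t = 2*(k*Real.pi*t) := by ring
    have h4 : 2 * Real.sin (k * Real.pi * t)^2 = 1 - Real.cos (2*(k * Real.pi * t)) := by
      rw [h1]; nlinarith
    rw [h3, h4]; ring
  simp only [h]
  rw [intervalIntegral.integral_sub ((continuous_pow n).intervalIntegrable 0 1) (cos_int k n),
    integral_pow]
  ring


lemma sin_a (k : ℕ) : Real.sin (2*k*Real.pi) = 0 := by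
  have : (2:ℝ)*k*Real.pi = (2*k : ℕ) * Real.pi := by push_cast; ring
  rw [this, Real.sin_nat_mul_pi]

lemma cos_a (k : ℕ) : Real.cos (2*k*Real.pi) = 1 := by
  have h : (2:ℝ)*k*Real.pi = (k : ℕ) * (2*Real.pi) := by ring
  rw [h, Real.cos_nat_mul_two_pi]

lemma hderiv_aux (a : ℝ) (ha : a ≠ 0) (n : ℕ) (t : ℝ) :
    HasDerivAt (fun t : ℝ => t^(n+2) * Real.sin (a*t)/a + ((n:ℝ)+2) * t^(n+1) * Real.cos (a*t)/a^2)
      (Real.cos (a*t)*t^(n+2) + ((n:ℝ)+2)*((n:ℝ)+1)/a^2 * (Real.cos (a*t)*t^n)) t := by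
  have hat : HasDerivAt (fun t : ℝ => a * t) a t := by
    simpa using (hasDerivAt_id t).const_mul a
  have hsin : HasDerivAt (fun t : ℝ => Real.sin (a*t)) (Real.cos (a*t) * a) t :=
    (Real.hasDerivAt_sin (a*t)).comp t hat
  have hcos : HasDerivAt (fun t : ℝ => Real.cos (a*t)) (-Real.sin (a*t) * a) t :=
    (Real.hasDerivAt_cos (a*t)).comp t hat
  have h := (((hasDerivAt_pow (n+2) t).mul hsin).div_const a).add
    (((HasDerivAt.const_mul ((n:ℝ)+2) (hasDerivAt_pow (n+1) t)).mul hcos).div_const (a^2))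
  refine h.congr_deriv ?_
  push_cast
  field_simp
  ring

lemma cosMoment_rec (k : ℕ) (hk : 1 ≤ k) (n : ℕ) :
    cosMoment k (n+2) = ((n:ℝ)+2)/(2*k*Real.pi)^2
      - ((n:ℝ)+2)*((n:ℝ)+1)/(2*k*Real.pi)^2 * cosMoment k n := by
  set a : ℝ := 2*k*Real.pi with ha_def
  have ha : a ≠ 0 := by
    have hk' : (0:ℝ) < k := by exact_mod_cast hk
    positivity
  have hc1 : Continuous (fun t : ℝ => Real.cos (a*t) * t^(n+2)) :=
    (Real.continuous_cos.comp (by continuity)).mul (continuous_pow (n+2))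
  have hc2 : Continuous (fun t : ℝ => ((n:ℝ)+2)*((n:ℝ)+1)/a^2 * (Real.cos (a*t) * t^n)) :=
    continuous_const.mul ((Real.continuous_cos.comp (by continuity)).mul (continuous_pow n))
  have key : (∫ t in (0:ℝ)..1, (Real.cos (a*t)*t^(n+2) + ((n:ℝ)+2)*((n:ℝ)+1)/a^2 * (Real.cos (a*t)*t^n)))
      = ((n:ℝ)+2)/a^2 := by
    rw [intervalIntegral.integral_eq_sub_of_hasDerivAt
      (fun t _ => hderiv_aux a ha n t) ((hc1.add hc2).intervalIntegrable 0 1)]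
    rw [mul_one, mul_zero]
    rw [sin_a k, cos_a k]
    norm_num
  rw [intervalIntegral.integral_add (hc1.intervalIntegrable 0 1) (hc2.intervalIntegrable 0 1),
    intervalIntegral.integral_const_mul] at key
  have e1 : cosMoment k (n+2) = ∫ t in (0:ℝ)..1, Real.cos (a*t) * t^(n+2) := by
    rfl
  have e2 : cosMoment k n = ∫ t in (0:ℝ)..1, Real.cos (a*t) * t^n := by
    rfl
  rw [e1, e2]
  linarith [key]

lemma cosMoment_one (k : ℕ) (hk : 1 ≤ k) : cosMoment k 1 = 0 := by
  set a : ℝ := 2*k*Real.pi with ha_def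
  have ha : a ≠ 0 := by
    have hk' : (0:ℝ) < k := by exact_mod_cast hk
    positivity
  have hderiv : ∀ t : ℝ, HasDerivAt (fun t : ℝ => t * Real.sin (a*t)/a + Real.cos (a*t)/a^2)
      (Real.cos (a*t) * t^1) t := by
    intro t
    have hat : HasDerivAt (fun t : ℝ => a * t) a t := by
      simpa using (hasDerivAt_id t).const_mul a
    have hsin : HasDerivAt (fun t : ℝ => Real.sin (a*t)) (Real.cos (a*t) * a) t :=
      (Real.hasDerivAt_sin (a*t)).comp t hat
    have hcos : HasDerivAt (fun t : ℝ => Real.cos (a*t)) (-Real.sin (a*t) * a) t :=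
      (Real.hasDerivAt_cos (a*t)).comp t hat
    have h := (((hasDerivAt_id t).mul hsin).div_const a).add (hcos.div_const (a^2))
    refine h.congr_deriv ?_
    simp only [id]
    field_simp
    ring
  have key : cosMoment k 1 = (1 * Real.sin (a*1)/a + Real.cos (a*1)/a^2) - (0 * Real.sin (a*0)/a + Real.cos (a*0)/a^2) := by
    unfold cosMoment
    rw [← intervalIntegral.integral_eq_sub_of_hasDerivAt (fun t _ => hderiv t)
      (((Real.continuous_cos.comp (by continuity)).mul (continuous_pow 1)).intervalIntegrable 0 1)]
  rw [key, mul_one, mul_zero, sin_a k, cos_a k]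
  norm_num

lemma cosMoment_odd (k : ℕ) (hk : 1 ≤ k) (m : ℕ) :
    cosMoment k (2*m+1) = -∑ n ∈ Finset.Icc 1 m,
        (-1 : ℝ)^n * (Nat.factorial (2 * m + 1)) /
          ((Nat.factorial (2 * (m - n) + 2)) * 2^(2 * n)) *
            (1 / ((k : ℝ)^(2 * n) * Real.pi^(2 * n))) := by
  have hπ : Real.pi ≠ 0 := Real.pi_ne_zero
  have hK : (k:ℝ) ≠ 0 := by
    have : (0:ℝ) < k := by exact_mod_cast hk
    positivity
  induction m with
  | zero => simp [cosMoment_one k hk]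
  | succ m ih =>
    have hfacn : Nat.factorial (2*m+1+2) = (2*m+3)*((2*m+2)*Nat.factorial (2*m+1)) := by
      rw [show 2*m+1+2 = (2*m+1+1)+1 from rfl, Nat.factorial_succ, Nat.factorial_succ]
    have h23 : 2*(m+1)+1 = (2*m+1)+2 := by ring
    rw [h23, cosMoment_rec k hk (2*m+1), ih]
    rw [← Finset.Ico_add_one_right_eq_Icc, ← Finset.Ico_add_one_right_eq_Icc, Finset.sum_Ico_eq_sum_range,
      Finset.sum_Ico_eq_sum_range]
    simp only [Nat.add_sub_cancel]
    rw [Finset.sum_range_succ']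
    have hterm : ∀ i ∈ Finset.range m,
        (-1 : ℝ)^(1+(i+1)) * (Nat.factorial (2 * m + 1 + 2)) /
          ((Nat.factorial (2 * ((m+1) - (1+(i+1))) + 2)) * 2^(2 * (1+(i+1)))) *
            (1 / ((k : ℝ)^(2 * (1+(i+1))) * Real.pi^(2 * (1+(i+1)))))
        = -(((2*(m:ℝ)+1)+2)*((2*(m:ℝ)+1)+1)/(2*k*Real.pi)^2) *
          ((-1 : ℝ)^(1+i) * (Nat.factorial (2 * m + 1)) /
          ((Nat.factorial (2 * (m - (1+i)) + 2)) * 2^(2 * (1+i))) *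
            (1 / ((k : ℝ)^(2 * (1+i)) * Real.pi^(2 * (1+i))))) := by
      intro i hi
      have hilt := Finset.mem_range.mp hi
      have hsub : (m+1) - (1+(i+1)) = m - (1+i) := by omega
      rw [hsub, hfacn]
      rw [show 2*(1+(i+1)) = 2*(1+i)+2 from by ring,
        show (1:ℕ)+(i+1) = (1+i)+1 from by ring]
      have hFne : ((Nat.factorial (2 * (m - (1+i)) + 2)) : ℝ) ≠ 0 := by
        exact_mod_cast (Nat.factorial_pos _).ne'
      push_cast
      simp only [pow_add, pow_succ]
      field_simp
      ring
    rw [Finset.sum_congr rfl hterm, ← Finset.mul_sum]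
    have hf1 : (-1 : ℝ)^(1+0) * (Nat.factorial (2 * m + 1 + 2)) /
          ((Nat.factorial (2 * ((m+1) - (1+0)) + 2)) * 2^(2 * (1+0))) *
            (1 / ((k : ℝ)^(2 * (1+0)) * Real.pi^(2 * (1+0))))
        = -(((2*(m:ℝ)+1)+2)/(2*k*Real.pi)^2) := by
      have hs : (m+1) - (1+0) = m := by omega
      have h2 : Nat.factorial (2*m+2) = (2*m+2) * Nat.factorial (2*m+1) :=
        Nat.factorial_succ (2*m+1)
      rw [hs, hfacn, h2]
      have hFne : ((Nat.factorial (2*m+1)) : ℝ) ≠ 0 := by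
        exact_mod_cast (Nat.factorial_pos _).ne'
      push_cast
      field_simp
      ring
    rw [hf1]
    push_cast
    ring

theorem odd_moment_formula (k : ℕ) (hk : 1 ≤ k) (m : ℕ) :
    bridgeMoment k (2 * m + 1) = 1 / (2 * (m : ℝ) + 2) +
      ∑ n ∈ Finset.Icc 1 m,
        (-1 : ℝ)^n * (Nat.factorial (2 * m + 1)) /
          ((Nat.factorial (2 * (m - n) + 2)) * 2^(2 * n)) *
            (1 / ((k : ℝ)^(2 * n) * Real.pi^(2 * n))) := by
  rw [bridge_eq, cosMoment_odd k hk m]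
  push_cast
  ring
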